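/- Let n, λ ∈ ℕ and let H be a bipartite covering of the complete multigraph K_n^λ (every pair of distinct vertices joined by an edge of multiplicity λ). Then cap(H) ≥ max{ 2λ(n−1), n·( log₂ n + ⌊(λ−1)/2⌋·log₂((log₂ n)/λ) − λ − 1 ) }. -/

import Mathlib

open Finset Real

set_option maxHeartbeats 1000000



lemma aux_choose : ∀ (k d : ℕ), k ≤ d → ((d : ℝ) / (k : ℝ)) ^ k ≤ (d.choose k : ℝ) := by
  intro k
  induction k with
  | zero => intro d _; simp
  | succ k ih =>
    intro d hd
    obtain ⟨e, rfl⟩ : ∃ e, d = e + 1 := ⟨d - 1, by omega⟩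
    have hke : k ≤ e := by omega
    have hk1 : (0:ℝ) < (k:ℝ) + 1 := by positivity
    have hchoose : ((e+1).choose (k+1) : ℝ) = (((e:ℝ)+1) / ((k:ℝ)+1)) * (e.choose k : ℝ) := by
      have h := Nat.add_one_mul_choose_eq e k
      have h' : ((e:ℝ)+1) * (e.choose k : ℝ) = ((e+1).choose (k+1) : ℝ) * ((k:ℝ)+1) := by
        exact_mod_cast congrArg (Nat.cast (R := ℝ)) h
      field_simp
      linarith
    have hstep : (((e:ℝ)+1) / ((k:ℝ)+1)) ^ k ≤ ((e:ℝ)/(k:ℝ)) ^ k := by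
      rcases Nat.eq_zero_or_pos k with hk0 | hk0
      · subst hk0; simp
      · have hkpos : (0:ℝ) < (k:ℝ) := by exact_mod_cast hk0
        apply pow_le_pow_left₀ (by positivity)
        rw [div_le_div_iff₀ hk1 hkpos]
        have : (k:ℝ) ≤ (e:ℝ) := by exact_mod_cast hke
        nlinarith
    rw [hchoose]
    push_cast
    have hb : (0:ℝ) ≤ ((e:ℝ)+1)/((k:ℝ)+1) := by positivity
    calc (((e:ℝ)+1) / ((k:ℝ)+1)) ^ (k+1)
        = (((e:ℝ)+1)/((k:ℝ)+1)) * ((((e:ℝ)+1)/((k:ℝ)+1))^k) := by ring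
      _ ≤ (((e:ℝ)+1)/((k:ℝ)+1)) * (((e:ℝ)/(k:ℝ))^k) := by
          exact mul_le_mul_of_nonneg_left hstep hb
      _ ≤ (((e:ℝ)+1)/((k:ℝ)+1)) * (e.choose k : ℝ) := by
          exact mul_le_mul_of_nonneg_left (ih e hke) hb

noncomputable def auxF (k : ℕ) : ℝ → ℝ := fun x => Real.exp (-(Real.log 2) * x) * x ^ k

lemma aux_exp_deriv (x : ℝ) :
    HasDerivAt (fun x : ℝ => Real.exp (-(Real.log 2) * x)) (Real.exp (-(Real.log 2) * x) * (-(Real.log 2))) x := by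
  have h0 : HasDerivAt (fun x : ℝ => -(Real.log 2) * x) (-(Real.log 2)) x := by
    simpa using (hasDerivAt_id x).const_mul (-(Real.log 2))
  exact h0.exp

lemma aux_f_deriv (k : ℕ) (x : ℝ) :
    HasDerivAt (auxF k)
      (Real.exp (-(Real.log 2) * x) * ((k:ℝ) * x ^ (k-1) - Real.log 2 * x ^ k)) x := by
  have := (aux_exp_deriv x).mul (hasDerivAt_pow k x)
  exact this.congr_deriv (by ring)

lemma aux_f1_deriv (k : ℕ) (x : ℝ) :
    HasDerivAt (fun x : ℝ => Real.exp (-(Real.log 2) * x) * ((k:ℝ) * x ^ (k-1) - Real.log 2 * x ^ k))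
      (Real.exp (-(Real.log 2) * x) *
        (Real.log 2 ^ 2 * x ^ k - 2 * Real.log 2 * (k:ℝ) * x ^ (k-1)
          + (k:ℝ) * ((k-1 : ℕ):ℝ) * x ^ (k-2))) x := by
  have h2 : HasDerivAt (fun x : ℝ => (k:ℝ) * x ^ (k-1) - Real.log 2 * x ^ k)
      ((k:ℝ) * (((k-1 : ℕ):ℝ) * x ^ (k-1-1)) - Real.log 2 * ((k:ℝ) * x ^ (k-1))) x := by
    have ha := (hasDerivAt_pow (k-1) x).const_mul (k:ℝ)
    have hb := (hasDerivAt_pow k x).const_mul (Real.log 2)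
    exact (ha.sub hb).congr_deriv (by ring)
  have := (aux_exp_deriv x).mul h2
  have hkk : k - 1 - 1 = k - 2 := by omega
  exact this.congr_deriv (by rw [hkk]; ring)

lemma aux_quad_nonneg (k : ℕ) {x : ℝ} (hx : 2 * (k:ℝ) + 1 ≤ x) :
    0 ≤ Real.log 2 ^ 2 * x ^ k - 2 * Real.log 2 * (k:ℝ) * x ^ (k-1)
          + (k:ℝ) * ((k-1 : ℕ):ℝ) * x ^ (k-2) := by
  have ha1 : (0.6931471803 : ℝ) < Real.log 2 := Real.log_two_gt_d9
  have hxpos : (0:ℝ) < x := lt_of_lt_of_le (by positivity) hx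
  rcases k with _ | k
  · simp only [Nat.cast_zero, pow_zero, Nat.zero_sub, Nat.cast_ofNat, mul_zero, zero_mul,
      mul_one, sub_zero, add_zero]
    positivity
  rcases k with _ | s
  · push_cast at hx ⊢
    norm_num
    have h3 : 2 ≤ Real.log 2 * x := by nlinarith
    nlinarith
  · -- k = s + 2
    push_cast at hx ⊢
    set K : ℝ := (s:ℝ) + 2 with hKdef
    have hKnn : (0:ℝ) ≤ K := by positivity
    have hsq : Real.sqrt K ^ 2 = K := Real.sq_sqrt hKnn
    have hsn : (0:ℝ) ≤ Real.sqrt K := Real.sqrt_nonneg K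
    have hx' : 2 * K + 1 ≤ x := by rw [hKdef]; linarith
    have hsqrt : Real.sqrt K ≤ Real.log 2 * x - K := by
      have h2 : 0 ≤ Real.log 2 * (x - (2*K+1)) :=
        mul_nonneg (by linarith) (by linarith)
      nlinarith [sq_nonneg (Real.sqrt K - 1.3),
        mul_nonneg (show (0:ℝ) ≤ Real.log 2 - 0.6931471803 by linarith)
          (show (0:ℝ) ≤ 2*K+1 by linarith)]
    have hq : 0 ≤ (Real.log 2 * x - K)^2 - K := by nlinarith
    have hxs : (0:ℝ) ≤ x ^ s := pow_nonneg hxpos.le s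
    have hiden : Real.log 2 ^ 2 * x ^ (s+1+1) - 2 * Real.log 2 * ((s:ℝ)+1+1) * x ^ (s+1)
          + ((s:ℝ)+1+1) * ((s:ℝ)+1) * x ^ s
        = x ^ s * ((Real.log 2 * x - K)^2 - K) := by
      rw [hKdef]
      ring
    rw [hiden]
    exact mul_nonneg hxs hq

lemma aux_convex (k : ℕ) (c : ℝ) (hc : 2 * (k:ℝ) + 1 ≤ c) :
    ConvexOn ℝ (Set.Ici c) (auxF k) := by
  have hderiv : deriv (auxF k)
      = fun x => Real.exp (-(Real.log 2) * x) * ((k:ℝ) * x ^ (k-1) - Real.log 2 * x ^ k) :=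
    funext fun x => (aux_f_deriv k x).deriv
  apply convexOn_of_deriv2_nonneg (convex_Ici c)
  · apply Continuous.continuousOn
    unfold auxF
    fun_prop
  · intro x _
    exact (aux_f_deriv k x).differentiableAt.differentiableWithinAt
  · rw [hderiv]
    intro x _
    exact (aux_f1_deriv k x).differentiableAt.differentiableWithinAt
  · intro x hx
    rw [interior_Ici] at hx
    have h2 : deriv (deriv (auxF k)) x = Real.exp (-(Real.log 2) * x) *
        (Real.log 2 ^ 2 * x ^ k - 2 * Real.log 2 * (k:ℝ) * x ^ (k-1)
          + (k:ℝ) * ((k-1 : ℕ):ℝ) * x ^ (k-2)) := by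
      rw [hderiv]
      exact (aux_f1_deriv k x).deriv
    have : deriv^[2] (auxF k) x = deriv (deriv (auxF k)) x := by
      simp [Function.iterate_succ, Function.iterate_one]
    rw [this, h2]
    exact mul_nonneg (Real.exp_nonneg _) (aux_quad_nonneg k (le_trans hc (le_of_lt hx)))

lemma aux_anti (k : ℕ) (c : ℝ) (hc : 2 * (k:ℝ) + 1 ≤ c) :
    StrictAntiOn (auxF k) (Set.Ici c) := by
  have ha1 : (0.6931471803 : ℝ) < Real.log 2 := Real.log_two_gt_d9
  apply strictAntiOn_of_deriv_neg (convex_Ici c)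
  · apply Continuous.continuousOn
    unfold auxF
    fun_prop
  · intro x hx
    rw [interior_Ici] at hx
    have hxc : 2 * (k:ℝ) + 1 ≤ x := le_trans hc (le_of_lt hx)
    have hxpos : (0:ℝ) < x := lt_of_lt_of_le (by positivity) hxc
    rw [(aux_f_deriv k x).deriv]
    apply mul_neg_of_pos_of_neg (Real.exp_pos _)
    rcases k with _ | s
    · simp only [Nat.cast_zero, zero_mul, pow_zero, mul_one, zero_sub, neg_neg]
      linarith
    · have e1 : s + 1 - 1 = s := by omega
      rw [e1]
      push_cast at hxc ⊢
      have hxs : (0:ℝ) < x ^ s := pow_pos hxpos s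
      have hkey : ((s:ℝ)+1) < Real.log 2 * x := by nlinarith
      calc ((s:ℝ)+1) * x ^ s - Real.log 2 * x ^ (s+1)
          = x ^ s * (((s:ℝ)+1) - Real.log 2 * x) := by ring
        _ < 0 := mul_neg_of_pos_of_neg hxs (by linarith)

lemma aux_count_sigma {m : ℕ} (bad : Fin m → Bool) (D : Finset (Fin m)) (k : ℕ) :
    2 ^ (m - D.card) * ∑ j ∈ Finset.range (k+1), D.card.choose j ≤
      (Finset.univ.filter
        (fun σ : Fin m → Bool => (D.filter (fun i => σ i = bad i)).card ≤ k)).card := by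
  classical
  set E1 := D.powerset.filter (fun s => s.card ≤ k) with hE1
  set E2 := ((Finset.univ : Finset (Fin m)) \ D).powerset with hE2
  have hcard1 : E1.card = ∑ j ∈ Finset.range (k+1), D.card.choose j := by
    have hEq : E1 = (Finset.range (k+1)).biUnion (fun j => Finset.powersetCard j D) := by
      ext s
      simp only [hE1, mem_filter, mem_powerset, mem_biUnion, mem_range,
        Finset.mem_powersetCard, Nat.lt_succ_iff]
      constructor
      · rintro ⟨h1, h2⟩; exact ⟨s.card, h2, h1, rfl⟩
      · rintro ⟨j, hj, h1, rfl⟩; exact ⟨h1, hj⟩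
    rw [hEq, Finset.card_biUnion]
    · exact Finset.sum_congr rfl fun j _ => Finset.card_powersetCard j D
    · intro j _ j' _ hne
      simp only [Function.onFun]
      rw [Finset.disjoint_left]
      intro s hs hs'
      rw [Finset.mem_powersetCard] at hs hs'
      exact hne (hs.2 ▸ hs'.2 ▸ rfl)
  have hcard2 : E2.card = 2 ^ (m - D.card) := by
    rw [hE2, Finset.card_powerset, Finset.card_sdiff_of_subset (Finset.subset_univ D)]
    congr 1
    simp [Finset.card_univ]
  have hprod : (E1 ×ˢ E2).card = 2 ^ (m - D.card) * ∑ j ∈ Finset.range (k+1), D.card.choose j := by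
    rw [Finset.card_product, hcard1, hcard2, mul_comm]
  rw [← hprod]
  apply Finset.card_le_card_of_injOn
    (fun p => fun i => if i ∈ D then (if i ∈ p.1 then bad i else !(bad i)) else decide (i ∈ p.2))
  · rintro ⟨s, u⟩ hp
    simp only [Finset.mem_coe, Finset.mem_product, hE1, hE2, mem_filter, mem_powerset] at hp
    obtain ⟨⟨hsD, hsk⟩, _⟩ := hp
    simp only [Finset.mem_coe, mem_filter, Finset.mem_univ, true_and]
    have hfe : D.filter (fun i =>
        (if i ∈ D then (if i ∈ s then bad i else !(bad i)) else decide (i ∈ u)) = bad i) = s := by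
      ext i
      simp only [mem_filter]
      constructor
      · rintro ⟨hiD, hcond⟩
        rw [if_pos hiD] at hcond
        by_contra his
        rw [if_neg his] at hcond
        exact (Bool.not_ne_self (bad i)) hcond
      · intro his
        have hiD := hsD his
        refine ⟨hiD, ?_⟩
        rw [if_pos hiD, if_pos his]
    rw [hfe]
    exact hsk
  · rintro ⟨s, u⟩ hp ⟨s', u'⟩ hp' heq
    simp only [Finset.coe_product, Set.mem_prod, Finset.mem_coe, hE1, hE2, mem_filter,
      mem_powerset] at hp hp'
    obtain ⟨⟨hsD, _⟩, huD⟩ := hp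
    obtain ⟨⟨hsD', _⟩, huD'⟩ := hp'
    have hfun : ∀ i, (if i ∈ D then (if i ∈ s then bad i else !(bad i)) else decide (i ∈ u))
        = (if i ∈ D then (if i ∈ s' then bad i else !(bad i)) else decide (i ∈ u')) :=
      fun i => congrFun heq i
    have hss : s = s' := by
      ext i
      constructor
      · intro his
        have hiD := hsD his
        have h := hfun i
        rw [if_pos hiD, if_pos hiD, if_pos his] at h
        by_contra his'
        rw [if_neg his'] at h
        exact (Bool.not_ne_self (bad i)) h.symm
      · intro his'
        have hiD := hsD' his'
        have h := hfun i
        rw [if_pos hiD, if_pos hiD, if_pos his'] at h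
        by_contra his
        rw [if_neg his] at h
        exact (Bool.not_ne_self (bad i)) h
    have huu : u = u' := by
      ext i
      constructor
      · intro hiu
        have hiD : i ∉ D := (Finset.mem_sdiff.1 (huD hiu)).2
        have h := hfun i
        rw [if_neg hiD, if_neg hiD] at h
        have : decide (i ∈ u) = true := by simp [hiu]
        rw [this] at h
        exact of_decide_eq_true h.symm
      · intro hiu'
        have hiD : i ∉ D := (Finset.mem_sdiff.1 (huD' hiu')).2
        have h := hfun i
        rw [if_neg hiD, if_neg hiD] at h
        have : decide (i ∈ u') = true := by simp [hiu']
        rw [this] at h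
        exact of_decide_eq_true h
    rw [Prod.ext_iff]
    exact ⟨hss, huu⟩




lemma aux_hreal (n lam m k : ℕ) (hn2 : 2 ≤ n) (hk2 : 2 * k + 1 ≤ lam)
    (A B : Fin m → Finset (Fin n))
    (hdisj : ∀ i, Disjoint (A i) (B i))
    (hcover : ∀ x y : Fin n, x ≠ y →
      lam ≤ (Finset.univ.filter
        (fun i => (x ∈ A i ∧ y ∈ B i) ∨ (x ∈ B i ∧ y ∈ A i))).card)
    (d : Fin n → ℕ)
    (hdcard : ∀ v, d v = (Finset.univ.filter (fun i => v ∈ A i ∪ B i)).card) :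
    ∑ v : Fin n, (2:ℝ)^(-((d v : ℕ):ℝ)) * ((d v).choose k : ℝ) ≤ 1 := by
  classical
  have hdm : ∀ v, d v ≤ m := by
    intro v
    rw [hdcard v]
    exact le_trans (Finset.card_filter_le _ _) (by simp)
  have hsurv : ∀ σ : Fin m → Bool,
      (Finset.univ.filter (fun v : Fin n =>
        (Finset.univ.filter
          (fun i => (σ i = true ∧ v ∈ A i) ∨ (σ i = false ∧ v ∈ B i))).card ≤ k)).card ≤ 1 := by
    intro σ
    rw [Finset.card_le_one]
    intro x hx y hy
    by_contra hxy
    simp only [Finset.mem_filter, Finset.mem_univ, true_and] at hx hy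
    have hsep := hcover x y hxy
    have hsub : Finset.univ.filter (fun i => (x ∈ A i ∧ y ∈ B i) ∨ (x ∈ B i ∧ y ∈ A i)) ⊆
        (Finset.univ.filter (fun i => (σ i = true ∧ x ∈ A i) ∨ (σ i = false ∧ x ∈ B i))) ∪
        (Finset.univ.filter (fun i => (σ i = true ∧ y ∈ A i) ∨ (σ i = false ∧ y ∈ B i))) := by
      intro i hi
      simp only [Finset.mem_filter, Finset.mem_univ, true_and, Finset.mem_union] at hi ⊢
      cases hb : σ i <;> tauto
    have hcard := Finset.card_le_card hsub
    have hcu := Finset.card_union_le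
      (Finset.univ.filter (fun i => (σ i = true ∧ x ∈ A i) ∨ (σ i = false ∧ x ∈ B i)))
      (Finset.univ.filter (fun i => (σ i = true ∧ y ∈ A i) ∨ (σ i = false ∧ y ∈ B i)))
    omega
  have hv : ∀ v : Fin n, 2 ^ (m - d v) * (∑ j ∈ Finset.range (k+1), (d v).choose j) ≤
      (Finset.univ.filter (fun σ : Fin m → Bool =>
        (Finset.univ.filter
          (fun i => (σ i = true ∧ v ∈ A i) ∨ (σ i = false ∧ v ∈ B i))).card ≤ k)).card := by
    intro v
    have hEq : ∀ σ : Fin m → Bool,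
        Finset.univ.filter (fun i => (σ i = true ∧ v ∈ A i) ∨ (σ i = false ∧ v ∈ B i))
        = (Finset.univ.filter (fun i => v ∈ A i ∪ B i)).filter
            (fun i => σ i = decide (v ∈ A i)) := by
      intro σ
      ext i
      simp only [Finset.mem_filter, Finset.mem_univ, true_and, Finset.mem_union]
      by_cases hA : v ∈ A i <;> by_cases hB : v ∈ B i
      · exact absurd hB (Finset.disjoint_left.1 (hdisj i) hA)
      · simp [hA, hB]
      · simp [hA, hB]
      · simp [hA, hB]
    have hfilter_eq : (Finset.univ.filter (fun σ : Fin m → Bool =>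
          ((Finset.univ.filter (fun i => v ∈ A i ∪ B i)).filter
            (fun i => σ i = decide (v ∈ A i))).card ≤ k))
        = (Finset.univ.filter (fun σ : Fin m → Bool =>
          (Finset.univ.filter
            (fun i => (σ i = true ∧ v ∈ A i) ∨ (σ i = false ∧ v ∈ B i))).card ≤ k)) := by
      apply Finset.filter_congr
      intro σ _
      rw [hEq σ]
    rw [hdcard v, ← hfilter_eq]
    exact aux_count_sigma (fun i => decide (v ∈ A i)) _ k
  have hcount : ∑ v, 2 ^ (m - d v) * (∑ j ∈ Finset.range (k+1), (d v).choose j) ≤ 2 ^ m := by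
    calc ∑ v, 2 ^ (m - d v) * (∑ j ∈ Finset.range (k+1), (d v).choose j)
        ≤ ∑ v : Fin n, (Finset.univ.filter (fun σ : Fin m → Bool =>
            (Finset.univ.filter
              (fun i => (σ i = true ∧ v ∈ A i) ∨ (σ i = false ∧ v ∈ B i))).card ≤ k)).card :=
          Finset.sum_le_sum fun v _ => hv v
      _ = ∑ σ : Fin m → Bool, (Finset.univ.filter (fun v : Fin n =>
            (Finset.univ.filter
              (fun i => (σ i = true ∧ v ∈ A i) ∨ (σ i = false ∧ v ∈ B i))).card ≤ k)).card := by
          simp only [Finset.card_filter]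
          exact Finset.sum_comm
      _ ≤ ∑ _σ : Fin m → Bool, 1 := Finset.sum_le_sum fun σ _ => hsurv σ
      _ = 2 ^ m := by
          rw [Finset.sum_const, Finset.card_univ, smul_eq_mul, mul_one]
          simp [Fintype.card_fun]
  have hterm : ∀ v : Fin n, 2 ^ (m - d v) * (d v).choose k
      ≤ 2 ^ (m - d v) * (∑ j ∈ Finset.range (k+1), (d v).choose j) :=
    fun v => Nat.mul_le_mul_left _
      (Finset.single_le_sum (f := fun j => (d v).choose j)
        (fun j _ => Nat.zero_le _) (Finset.self_mem_range_succ k))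
  have hN : ∑ v, 2 ^ (m - d v) * (d v).choose k ≤ 2 ^ m :=
    le_trans (Finset.sum_le_sum fun v _ => hterm v) hcount
  have hNR : ∑ v, ((2:ℝ) ^ (m - d v) * ((d v).choose k : ℝ)) ≤ (2:ℝ)^m := by
    exact_mod_cast hN
  have hpos : (0:ℝ) < 2^m := by positivity
  have h1 : (1:ℝ) = (2:ℝ)^m / 2^m := by field_simp
  rw [h1]
  calc ∑ v, (2:ℝ)^(-((d v:ℕ):ℝ)) * ((d v).choose k : ℝ)
      = ∑ v, ((2:ℝ)^(m - d v) * ((d v).choose k:ℝ)) / 2^m := by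
        refine Finset.sum_congr rfl fun v _ => ?_
        rw [pow_sub₀ (2:ℝ) two_ne_zero (hdm v),
          Real.rpow_neg (by norm_num : (0:ℝ) ≤ 2), Real.rpow_natCast]
        have h2 : ((2:ℝ)^(d v)) ≠ 0 := by positivity
        have h3 : ((2:ℝ)^m) ≠ 0 := by positivity
        field_simp
        try ring
    _ = (∑ v, ((2:ℝ)^(m - d v) * ((d v).choose k:ℝ))) / 2^m := by rw [Finset.sum_div]
    _ ≤ (2:ℝ)^m / 2^m := by gcongr

lemma aux_analytic (n lam k : ℕ) (hn2 : 2 ≤ n) (hk2 : 2 * k + 1 ≤ lam)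
    (d : Fin n → ℕ) (hdlam : ∀ v, lam ≤ d v)
    (hreal : ∑ v : Fin n, (2:ℝ)^(-((d v : ℕ):ℝ)) * ((d v).choose k : ℝ) ≤ 1) :
    (n:ℝ) * ((Real.logb 2 n + (k:ℝ) * Real.logb 2 (Real.logb 2 n / (lam:ℝ))) - (lam:ℝ) - 1)
      ≤ ∑ v : Fin n, ((d v : ℕ):ℝ) := by
  have hlam : 1 ≤ lam := by omega
  have hlamR : (0:ℝ) < lam := by exact_mod_cast hlam
  have hnpos : 0 < n := by omega
  have hnRpos : (0:ℝ) < n := by exact_mod_cast hnpos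
  have hkR : 2*(k:ℝ)+1 ≤ (lam:ℝ) := by exact_mod_cast hk2
  set L : ℝ := Real.logb 2 n with hL
  have hLpos : 0 < L := Real.logb_pos (by norm_num) (by exact_mod_cast hn2)
  have hconv := aux_convex k (lam:ℝ) hkR
  have hanti := aux_anti k (lam:ℝ) hkR
  have hfle : ∀ v : Fin n, auxF k ((d v : ℕ):ℝ)
      ≤ (k:ℝ)^k * ((2:ℝ)^(-((d v:ℕ):ℝ)) * ((d v).choose k : ℝ)) := by
    intro v
    have hkd : k ≤ d v := le_trans (by omega) (hdlam v)
    have hchoose := aux_choose k (d v) hkd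
    have hexp2 : Real.exp (-(Real.log 2) * ((d v:ℕ):ℝ)) = (2:ℝ)^(-((d v:ℕ):ℝ)) := by
      rw [Real.rpow_def_of_pos (by norm_num : (0:ℝ) < 2)]
      ring_nf
    have hrpnn : (0:ℝ) ≤ (2:ℝ)^(-((d v:ℕ):ℝ)) := Real.rpow_nonneg (by norm_num) _
    show Real.exp (-(Real.log 2) * ((d v:ℕ):ℝ)) * ((d v:ℕ):ℝ)^k ≤ _
    rw [hexp2]
    rcases Nat.eq_zero_or_pos k with hk0 | hk0
    · rw [hk0]
      simp
    · have hkRpos : (0:ℝ) < (k:ℝ) := by exact_mod_cast hk0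
      have hdk : ((d v:ℕ):ℝ)^k ≤ (k:ℝ)^k * ((d v).choose k : ℝ) := by
        have hmul := mul_le_mul_of_nonneg_left hchoose (le_of_lt (pow_pos hkRpos k))
        calc ((d v:ℕ):ℝ)^k = (k:ℝ)^k * (((d v:ℕ):ℝ)/(k:ℝ))^k := by
              rw [← mul_pow, mul_div_cancel₀ _ (ne_of_gt hkRpos)]
          _ ≤ (k:ℝ)^k * ((d v).choose k : ℝ) := hmul
      calc (2:ℝ)^(-((d v:ℕ):ℝ)) * ((d v:ℕ):ℝ)^k
          ≤ (2:ℝ)^(-((d v:ℕ):ℝ)) * ((k:ℝ)^k * ((d v).choose k : ℝ)) :=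
            mul_le_mul_of_nonneg_left hdk hrpnn
        _ = (k:ℝ)^k * ((2:ℝ)^(-((d v:ℕ):ℝ)) * ((d v).choose k : ℝ)) := by ring
  have hkknn : (0:ℝ) ≤ (k:ℝ)^k := by positivity
  have hfsum : ∑ v, auxF k ((d v:ℕ):ℝ) ≤ (k:ℝ)^k := by
    calc ∑ v, auxF k ((d v:ℕ):ℝ)
        ≤ ∑ v, (k:ℝ)^k * ((2:ℝ)^(-((d v:ℕ):ℝ)) * ((d v).choose k : ℝ)) :=
          Finset.sum_le_sum fun v _ => hfle v
      _ = (k:ℝ)^k * ∑ v, (2:ℝ)^(-((d v:ℕ):ℝ)) * ((d v).choose k : ℝ) := by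
          rw [Finset.mul_sum]
      _ ≤ (k:ℝ)^k * 1 := mul_le_mul_of_nonneg_left hreal hkknn
      _ = (k:ℝ)^k := mul_one _
  set xb : ℝ := ∑ v : Fin n, (1/(n:ℝ)) • ((d v:ℕ):ℝ) with hxb
  have hwsum : ∑ _v : Fin n, (1/(n:ℝ)) = 1 := by
    rw [Finset.sum_const, Finset.card_univ, Fintype.card_fin, nsmul_eq_mul]
    field_simp
  have hJ : auxF k xb ≤ ∑ v : Fin n, (1/(n:ℝ)) • auxF k ((d v:ℕ):ℝ) :=
    hconv.map_sum_le (fun v _ => by positivity) hwsum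
      (fun v _ => Set.mem_Ici.2 (by exact_mod_cast hdlam v))
  have hJ2 : auxF k xb ≤ (k:ℝ)^k / n := by
    calc auxF k xb ≤ ∑ v : Fin n, (1/(n:ℝ)) • auxF k ((d v:ℕ):ℝ) := hJ
      _ = (1/(n:ℝ)) * ∑ v, auxF k ((d v:ℕ):ℝ) := by
          simp only [smul_eq_mul]
          rw [Finset.mul_sum]
      _ ≤ (1/(n:ℝ)) * (k:ℝ)^k := mul_le_mul_of_nonneg_left hfsum (by positivity)
      _ = (k:ℝ)^k / n := by ring
  have hxb_ge : (lam:ℝ) ≤ xb := by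
    have hle : ∑ v : Fin n, (1/(n:ℝ)) * (lam:ℝ) ≤ ∑ v : Fin n, (1/(n:ℝ)) * ((d v:ℕ):ℝ) :=
      Finset.sum_le_sum fun v _ =>
        mul_le_mul_of_nonneg_left (by exact_mod_cast hdlam v) (by positivity)
    have hconst : ∑ _v : Fin n, (1/(n:ℝ)) * (lam:ℝ) = (lam:ℝ) := by
      rw [Finset.sum_const, Finset.card_univ, Fintype.card_fin, nsmul_eq_mul]
      field_simp
    rw [hxb]
    simp only [smul_eq_mul]
    rw [← hconst]
    exact hle
  have hsum_x : ∑ v : Fin n, ((d v:ℕ):ℝ) = n * xb := by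
    rw [hxb]
    simp only [smul_eq_mul]
    rw [← Finset.mul_sum]
    field_simp
  set t0 : ℝ := L + k * Real.logb 2 (L / lam) with ht0
  have hkey : t0 - (lam:ℝ) - 1 ≤ xb := by
    by_cases hcase : t0 ≤ (lam:ℝ)
    · linarith
    · push_neg at hcase
      have hft0 : (k:ℝ)^k / n ≤ auxF k t0 := by
        have h2ne : Real.log 2 ≠ 0 := ne_of_gt (Real.log_pos (by norm_num))
        have hdivpos : (0:ℝ) < L / lam := div_pos hLpos hlamR
        have hexp_t0 : Real.exp (-(Real.log 2) * t0) = (1/(n:ℝ)) * ((lam:ℝ)/L)^k := by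
          rw [ht0, show -(Real.log 2) * (L + (k:ℝ) * Real.logb 2 (L/(lam:ℝ)))
            = (-(Real.log 2 * L)) + (k:ℝ) * (-(Real.log 2 * Real.logb 2 (L/(lam:ℝ)))) by ring,
            Real.exp_add]
          congr 1
          · have hln : Real.log 2 * L = Real.log n := by
              rw [hL, Real.logb]
              field_simp
            rw [Real.exp_neg, hln, Real.exp_log hnRpos, one_div]
          · rw [Real.exp_nat_mul]
            have hln : Real.log 2 * Real.logb 2 (L/(lam:ℝ)) = Real.log (L/(lam:ℝ)) := by
              rw [Real.logb]
              field_simp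
            rw [Real.exp_neg, hln, Real.exp_log hdivpos, inv_div]
        have hklL : (k:ℝ) * L ≤ (lam:ℝ) * t0 := by
          have hklam : (k:ℝ) ≤ (lam:ℝ) := by linarith
          by_cases hcase2 : L ≤ (lam:ℝ)
          · have e1 : 0 ≤ (k:ℝ) * ((lam:ℝ) - L) :=
              mul_nonneg (Nat.cast_nonneg k) (by linarith)
            have e2 : 0 ≤ (lam:ℝ) * (t0 - (k:ℝ)) :=
              mul_nonneg hlamR.le (by linarith)
            nlinarith
          · push_neg at hcase2
            have hlogb_nonneg : 0 ≤ Real.logb 2 (L/(lam:ℝ)) :=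
              Real.logb_nonneg (by norm_num) (by rw [le_div_iff₀ hlamR]; linarith)
            have ht0L : L ≤ t0 := by
              rw [ht0]
              nlinarith [mul_nonneg (Nat.cast_nonneg (α := ℝ) k) hlogb_nonneg]
            have e1 : 0 ≤ ((lam:ℝ) - (k:ℝ)) * L := mul_nonneg (by linarith) hLpos.le
            have e2 : 0 ≤ (lam:ℝ) * (t0 - L) := mul_nonneg hlamR.le (by linarith)
            nlinarith
        have hkk : (k:ℝ)^k ≤ ((lam:ℝ)/L)^k * t0^k := by
          rw [← mul_pow]
          apply pow_le_pow_left₀ (Nat.cast_nonneg k)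
          rw [div_mul_eq_mul_div, le_div_iff₀ hLpos]
          linarith
        show (k:ℝ)^k / n ≤ Real.exp (-(Real.log 2) * t0) * t0^k
        rw [hexp_t0]
        calc (k:ℝ)^k / n ≤ (((lam:ℝ)/L)^k * t0^k) / n := by gcongr
          _ = (1/(n:ℝ)) * ((lam:ℝ)/L)^k * t0^k := by ring
      have hxbt : t0 ≤ xb := by
        by_contra hlt
        push_neg at hlt
        have h1 := hanti (Set.mem_Ici.2 hxb_ge) (Set.mem_Ici.2 (le_of_lt hcase)) hlt
        linarith
      linarith
  rw [hsum_x]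
  calc (n:ℝ) * ((L + (k:ℝ) * Real.logb 2 (L/(lam:ℝ))) - (lam:ℝ) - 1)
      = (n:ℝ) * (t0 - (lam:ℝ) - 1) := by rw [ht0]
    _ ≤ (n:ℝ) * xb := mul_le_mul_of_nonneg_left hkey (le_of_lt hnRpos)

/- STATEMENT 2 (lower bound for bipartite coverings of `K_n^λ`).
A bipartite covering of the complete multigraph `K_n^λ` is a finite family of bipartite
graphs given by pairs of disjoint bipartition classes `(A i, B i)` such that every pair
of distinct vertices `x, y` is separated (i.e. the edge `xy` is present) by at least `λ`
of the pairs.  The capacity is `∑ i, |A i ∪ B i|`. -/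
theorem multigraph_hansel_lower_bound (n lam m : ℕ) (hn : 1 ≤ n) (hlam : 1 ≤ lam)
    (A B : Fin m → Finset (Fin n))
    (hdisj : ∀ i, Disjoint (A i) (B i))
    (hcover : ∀ x y : Fin n, x ≠ y →
      lam ≤ (Finset.univ.filter
        (fun i => (x ∈ A i ∧ y ∈ B i) ∨ (x ∈ B i ∧ y ∈ A i))).card) :
    max (2 * (lam : ℝ) * ((n : ℝ) - 1))
      ((n : ℝ) * (Real.logb 2 n
        + (⌊((lam : ℝ) - 1) / 2⌋ : ℝ) * Real.logb 2 (Real.logb 2 n / (lam : ℝ))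
        - (lam : ℝ) - 1))
      ≤ ∑ i, ((A i ∪ B i).card : ℝ) := by
  classical
  have hsum_nonneg : (0:ℝ) ≤ ∑ i, ((A i ∪ B i).card : ℝ) :=
    Finset.sum_nonneg fun i _ => by positivity
  have hlamR : (0:ℝ) < lam := by exact_mod_cast hlam
  apply max_le
  · -- ====== first bound : 2λ(n-1) ======
    have hcount1 : lam * (n * n - n) ≤ ∑ i, 2 * ((A i).card * (B i).card) := by
      have h0 : ∀ p ∈ (Finset.univ : Finset (Fin n)).offDiag,
          lam ≤ (Finset.univ.filter
            (fun i => (p.1 ∈ A i ∧ p.2 ∈ B i) ∨ (p.1 ∈ B i ∧ p.2 ∈ A i))).card :=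
        fun p hp => hcover p.1 p.2 (Finset.mem_offDiag.1 hp).2.2
      calc lam * (n * n - n)
          = (Finset.univ : Finset (Fin n)).offDiag.card • lam := by
            rw [Finset.offDiag_card, Finset.card_univ, Fintype.card_fin, smul_eq_mul, mul_comm]
        _ ≤ ∑ p ∈ (Finset.univ : Finset (Fin n)).offDiag,
              (Finset.univ.filter
                (fun i => (p.1 ∈ A i ∧ p.2 ∈ B i) ∨ (p.1 ∈ B i ∧ p.2 ∈ A i))).card :=
            Finset.card_nsmul_le_sum _ _ _ h0
        _ = ∑ i, ((Finset.univ : Finset (Fin n)).offDiag.filter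
              (fun p => (p.1 ∈ A i ∧ p.2 ∈ B i) ∨ (p.1 ∈ B i ∧ p.2 ∈ A i))).card := by
            simp only [Finset.card_filter]
            rw [Finset.sum_comm]
        _ = ∑ i, 2 * ((A i).card * (B i).card) := by
            refine Finset.sum_congr rfl fun i _ => ?_
            have hset : (Finset.univ : Finset (Fin n)).offDiag.filter
                (fun p => (p.1 ∈ A i ∧ p.2 ∈ B i) ∨ (p.1 ∈ B i ∧ p.2 ∈ A i))
                = (A i ×ˢ B i) ∪ (B i ×ˢ A i) := by
              ext p
              simp only [Finset.mem_filter, Finset.mem_offDiag, Finset.mem_union,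
                Finset.mem_product, Finset.mem_univ, true_and]
              constructor
              · rintro ⟨-, h⟩; tauto
              · intro h
                have hne : p.1 ≠ p.2 := by
                  rcases h with ⟨h1, h2⟩ | ⟨h1, h2⟩
                  · intro he; exact (Finset.disjoint_left.1 (hdisj i)) h1 (he ▸ h2)
                  · intro he; exact (Finset.disjoint_left.1 (hdisj i)) (he ▸ h2) h1
                exact ⟨hne, h⟩
            rw [hset, Finset.card_union_of_disjoint, Finset.card_product, Finset.card_product]
            · ring
            · rw [Finset.disjoint_left]
              rintro p hp hp'
              rw [Finset.mem_product] at hp hp'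
              exact (Finset.disjoint_left.1 (hdisj i)) hp.1 hp'.1
    have hnn : n ≤ n * n := by
      have := Nat.mul_le_mul_left n hn
      simpa using this
    have hcast : (lam : ℝ) * ((n:ℝ) * n - n) ≤ ∑ i, 2 * ((A i).card : ℝ) * ((B i).card : ℝ) := by
      calc (lam:ℝ) * ((n:ℝ) * n - n) = ((lam * (n*n - n) : ℕ) : ℝ) := by
            rw [Nat.cast_mul, Nat.cast_sub hnn, Nat.cast_mul]
        _ ≤ ((∑ i, 2 * ((A i).card * (B i).card) : ℕ) : ℝ) := by exact_mod_cast hcount1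
        _ = ∑ i, 2 * ((A i).card : ℝ) * ((B i).card : ℝ) := by
            push_cast
            exact Finset.sum_congr rfl fun i _ => by ring
    have hsq : ∀ i, 2 * ((A i).card:ℝ) * ((B i).card:ℝ) * 2 ≤ ((A i ∪ B i).card : ℝ)^2 := by
      intro i
      have hABreal : ((A i ∪ B i).card : ℝ) = (A i).card + (B i).card := by
        rw [Finset.card_union_of_disjoint (hdisj i)]; push_cast; ring
      rw [hABreal]
      nlinarith [sq_nonneg (((A i).card:ℝ) - ((B i).card:ℝ))]
    have hle_n : ∀ i, ((A i ∪ B i).card : ℝ) ≤ n := by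
      intro i
      have h := Finset.card_le_univ (A i ∪ B i)
      have h2 : Fintype.card (Fin n) = n := Fintype.card_fin n
      rw [h2] at h
      exact_mod_cast h
    have hsum2 : ∑ i, ((A i ∪ B i).card:ℝ)^2 ≤ (n:ℝ) * ∑ i, ((A i ∪ B i).card:ℝ) := by
      rw [Finset.mul_sum]
      apply Finset.sum_le_sum
      intro i _
      have h0 : (0:ℝ) ≤ ((A i ∪ B i).card:ℝ) := by positivity
      calc ((A i ∪ B i).card:ℝ)^2 = ((A i ∪ B i).card:ℝ) * ((A i ∪ B i).card:ℝ) := sq _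
        _ ≤ (n:ℝ) * ((A i ∪ B i).card:ℝ) := mul_le_mul_of_nonneg_right (hle_n i) h0
    have hmid : (∑ i, 2 * ((A i).card : ℝ) * ((B i).card : ℝ)) * 2
        ≤ ∑ i, ((A i ∪ B i).card:ℝ)^2 := by
      rw [Finset.sum_mul]
      exact Finset.sum_le_sum fun i _ => hsq i
    have hnRpos : (0:ℝ) < n := by exact_mod_cast hn
    have hfinal : (n:ℝ) * (2 * (lam:ℝ) * ((n:ℝ) - 1)) ≤ (n:ℝ) * ∑ i, ((A i ∪ B i).card:ℝ) := by
      calc (n:ℝ) * (2 * (lam:ℝ) * ((n:ℝ) - 1)) = ((lam:ℝ) * ((n:ℝ) * n - n)) * 2 := by ring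
        _ ≤ (∑ i, 2 * ((A i).card : ℝ) * ((B i).card : ℝ)) * 2 := by linarith [hcast]
        _ ≤ ∑ i, ((A i ∪ B i).card:ℝ)^2 := hmid
        _ ≤ (n:ℝ) * ∑ i, ((A i ∪ B i).card:ℝ) := hsum2
    exact le_of_mul_le_mul_left hfinal hnRpos
  · -- ====== second bound ======
    by_cases hn1 : n = 1
    · subst hn1
      simp only [Nat.cast_one, Real.logb_one, zero_div, Real.logb_zero, mul_zero, zero_add,
        one_mul, zero_sub]
      linarith [hsum_nonneg, hlamR]
    · have hn2 : 2 ≤ n := by omega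
      have hnRpos : (0:ℝ) < n := by exact_mod_cast hn
      set k := (lam - 1) / 2 with hkdef
      have hk2 : 2 * k + 1 ≤ lam := by omega
      have hfloorR : (⌊((lam : ℝ) - 1) / 2⌋ : ℝ) = (k : ℝ) := by
        have hfl : ⌊((lam : ℝ) - 1) / 2⌋ = (k : ℤ) := by
          rw [Int.floor_eq_iff]
          have h1 : (2*k : ℕ) ≤ lam - 1 := by omega
          have h2 : lam - 1 < 2*k + 2 := by omega
          have h1R : ((2*k : ℕ):ℝ) ≤ ((lam - 1 : ℕ):ℝ) := by exact_mod_cast h1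
          have h2R : ((lam - 1 : ℕ):ℝ) < ((2*k+2 : ℕ):ℝ) := by exact_mod_cast h2
          push_cast [Nat.cast_sub hlam] at h1R h2R
          constructor
          · push_cast
            rw [le_div_iff₀ (by norm_num : (0:ℝ) < 2)]
            linarith
          · push_cast
            rw [div_lt_iff₀ (by norm_num : (0:ℝ) < 2)]
            linarith
        rw [hfl]
        simp
      have hdlam : ∀ v : Fin n,
          lam ≤ (Finset.univ.filter (fun i => v ∈ A i ∪ B i)).card := by
        intro v
        obtain ⟨y, hy⟩ : ∃ y : Fin n, y ≠ v :=
          Fintype.exists_ne_of_one_lt_card (by simp; omega) v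
        refine le_trans (hcover v y (Ne.symm hy)) (Finset.card_le_card ?_)
        intro i hi
        simp only [Finset.mem_filter, Finset.mem_univ, true_and] at hi ⊢
        rw [Finset.mem_union]
        tauto
      have hreal := aux_hreal n lam m k hn2 hk2 A B hdisj hcover
        (fun v => (Finset.univ.filter (fun i => v ∈ A i ∪ B i)).card) (fun v => rfl)
      have hana := aux_analytic n lam k hn2 hk2
        (fun v => (Finset.univ.filter (fun i => v ∈ A i ∪ B i)).card) hdlam hreal
      have hNat : ∑ i, (A i ∪ B i).card
          = ∑ v : Fin n, (Finset.univ.filter (fun i => v ∈ A i ∪ B i)).card := by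
        calc ∑ i, (A i ∪ B i).card
            = ∑ i : Fin m, ∑ v : Fin n, if v ∈ A i ∪ B i then 1 else 0 := by
              refine Finset.sum_congr rfl fun i _ => ?_
              rw [← Finset.filter_univ_mem (A i ∪ B i), Finset.card_filter]
              simp
          _ = ∑ v : Fin n, ∑ i : Fin m, if v ∈ A i ∪ B i then 1 else 0 := Finset.sum_comm
          _ = _ := by
              refine Finset.sum_congr rfl fun v _ => ?_
              rw [Finset.card_filter]
      have hgoal_sum : ∑ i, ((A i ∪ B i).card : ℝ)
          = ∑ v : Fin n, (((Finset.univ.filter (fun i => v ∈ A i ∪ B i)).card : ℕ) : ℝ) := by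
        exact_mod_cast congrArg (Nat.cast (R := ℝ)) hNat
      rw [hgoal_sum, hfloorR]
      calc (n:ℝ) * (Real.logb 2 n + (k:ℝ) * Real.logb 2 (Real.logb 2 n / (lam:ℝ))
            - (lam:ℝ) - 1)
          = (n:ℝ) * ((Real.logb 2 n + (k:ℝ) * Real.logb 2 (Real.logb 2 n / (lam:ℝ)))
            - (lam:ℝ) - 1) := by ring
        _ ≤ _ := hana
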